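/- Suppose two purified H-channels [U, ε, E] and [U', ε', E'] have equal second-level superoperators, i.e., Tr_E(U⁽²⁾(σ ⊗ |ε⟩⟨ε|)U⁽²⁾†) = Tr_{E'}(U'⁽²⁾(σ ⊗ |ε'⟩⟨ε'|)U'⁽²⁾†) for all σ ∈ L(H ⊗ H). Then they have equal first-level superoperators: Tr_E(U(ρ ⊗ |ε⟩⟨ε|)U†) = Tr_{E'}(U'(ρ ⊗ |ε'⟩⟨ε'|)U'†) for all ρ ∈ L(H). -/
import Mathlib


open Matrix Kronecker BigOperators

noncomputable section

/-- Partial trace over the environment factor `e`. -/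
def ptrace {n e : Type*} [Fintype e] (M : Matrix (n × e) (n × e) ℂ) : Matrix n n ℂ :=
  Matrix.of fun i j => ∑ k, M (i, k) (j, k)

/-- The rank-one projector `|ε⟩⟨ε|`. -/
def vecProj {e : Type*} (ε : e → ℂ) : Matrix e e ℂ :=
  Matrix.of fun i j => ε i * star (ε j)

/-- The isometric embedding `I_H ⊗ |ε⟩ : H → H ⊗ E`. -/
def inj {n e : Type*} [DecidableEq n] (ε : e → ℂ) : Matrix (n × e) n ℂ :=
  Matrix.of fun p j => if p.1 = j then ε p.2 else 0

/-- First-level superoperator `ρ ↦ Tr_E (U (ρ ⊗ |ε⟩⟨ε|) U†)`. -/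
def S1 {n e : Type*} [Fintype n] [Fintype e] (U : Matrix (n × e) (n × e) ℂ) (ε : e → ℂ)
    (ρ : Matrix n n ℂ) : Matrix n n ℂ :=
  ptrace (U * (ρ ⊗ₖ vecProj ε) * Uᴴ)

/-- First-level transformation matrix `(I_H ⊗ ⟨ε|) U (I_H ⊗ |ε⟩)`. -/
def T1 {n e : Type*} [Fintype n] [Fintype e] [DecidableEq n]
    (U : Matrix (n × e) (n × e) ℂ) (ε : e → ℂ) : Matrix n n ℂ :=
  (inj (n := n) ε)ᴴ * U * inj ε

/-- `I_H ⊗ U` viewed as an operator on `(H ⊗ H) ⊗ E`. -/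
def idT {n e : Type*} [DecidableEq n] (U : Matrix (n × e) (n × e) ℂ) :
    Matrix ((n × n) × e) ((n × n) × e) ℂ :=
  Matrix.of fun p q => if p.1.1 = q.1.1 then U (p.1.2, p.2) (q.1.2, q.2) else 0

/-- The swap operator `𝔖` on `H ⊗ H`. -/
def swapM (n : Type*) [DecidableEq n] : Matrix (n × n) (n × n) ℂ :=
  Matrix.of fun p q => if p.1 = q.2 ∧ p.2 = q.1 then 1 else 0

/-- `U⁽²⁾ := (I_H ⊗ U)(𝔖 ⊗ I_E)(I_H ⊗ U)`. -/
def U2m {n e : Type*} [Fintype n] [Fintype e] [DecidableEq n] [DecidableEq e]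
    (U : Matrix (n × e) (n × e) ℂ) : Matrix ((n × n) × e) ((n × n) × e) ℂ :=
  idT U * (swapM n ⊗ₖ (1 : Matrix e e ℂ)) * idT U

/-- Second-level superoperator. -/
def S2 {n e : Type*} [Fintype n] [Fintype e] [DecidableEq n] [DecidableEq e]
    (U : Matrix (n × e) (n × e) ℂ) (ε : e → ℂ)
    (σ : Matrix (n × n) (n × n) ℂ) : Matrix (n × n) (n × n) ℂ :=
  ptrace (U2m U * (σ ⊗ₖ vecProj ε) * (U2m U)ᴴ)

/-- Second-level transformation matrix. -/
def T2 {n e : Type*} [Fintype n] [Fintype e] [DecidableEq n] [DecidableEq e]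
    (U : Matrix (n × e) (n × e) ℂ) (ε : e → ℂ) : Matrix (n × n) (n × n) ℂ :=
  (inj (n := n × n) ε)ᴴ * U2m U * inj ε


section Aux
variable {n e : Type*} [Fintype n] [Fintype e] [DecidableEq n] [DecidableEq e]

lemma colsum (U : Matrix (n × e) (n × e) ℂ) (hU : Uᴴ * U = 1) (p q : n × e) :
    ∑ c, (starRingEnd ℂ) (U c p) * U c q = if p = q then 1 else 0 := by
  have := congrFun (congrFun (congrArg (fun M => (M : Matrix (n×e) (n×e) ℂ)) hU) p) q
  simpa [Matrix.mul_apply, Matrix.conjTranspose_apply, Matrix.one_apply] using this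

lemma step1 (U : Matrix (n × e) (n × e) ℂ) (hU : Uᴴ * U = 1)
    (B : Matrix ((n × n) × e) ((n × n) × e) ℂ) (i j : n) :
    ∑ a, ∑ k, (idT U * B * (idT U)ᴴ) ((i,a),k) ((j,a),k)
      = ∑ a, ∑ k, B ((i,a),k) ((j,a),k) := by
  have expand : ∀ a k, (idT U * B * (idT U)ᴴ) ((i,a),k) ((j,a),k)
      = ∑ q : n × e, ∑ p : n × e,
          U (a,k) p * B ((i,p.1),p.2) ((j,q.1),q.2) * star (U (a,k) q) := by
    intro a k
    simp only [Matrix.mul_apply, Matrix.conjTranspose_apply, idT, Matrix.of_apply]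
    rw [Fintype.sum_prod_type]
    rw [Fintype.sum_prod_type]
    simp [Fintype.sum_prod_type, ite_and, Finset.sum_mul, Finset.mul_sum,
      mul_comm, mul_left_comm, apply_ite (starRingEnd ℂ), mul_ite, mul_zero]
  calc ∑ a, ∑ k, (idT U * B * (idT U)ᴴ) ((i,a),k) ((j,a),k)
      = ∑ c : n × e, ∑ q : n × e, ∑ p : n × e,
          U c p * B ((i,p.1),p.2) ((j,q.1),q.2) * star (U c q) := by
        simp only [expand]
        exact (Fintype.sum_prod_type (f := fun c : n × e => ∑ q : n × e, ∑ p : n × e,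
          U c p * B ((i,p.1),p.2) ((j,q.1),q.2) * star (U c q))).symm
    _ = ∑ q : n × e, ∑ p : n × e,
          (∑ c, star (U c q) * U c p) * B ((i,p.1),p.2) ((j,q.1),q.2) := by
        rw [Finset.sum_comm]
        refine Finset.sum_congr rfl fun q _ => ?_
        rw [Finset.sum_comm]
        refine Finset.sum_congr rfl fun p _ => ?_
        rw [Finset.sum_mul]
        exact Finset.sum_congr rfl fun c _ => by ring
    _ = ∑ q : n × e, B ((i,q.1),q.2) ((j,q.1),q.2) := by
        simp [colsum U hU, ite_mul]
    _ = ∑ a, ∑ k, B ((i,a),k) ((j,a),k) :=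
        Fintype.sum_prod_type (f := fun q : n × e => B ((i,q.1),q.2) ((j,q.1),q.2))

lemma step2 (C : Matrix ((n × n) × e) ((n × n) × e) ℂ) (p q : (n × n) × e) :
    ((swapM n ⊗ₖ (1 : Matrix e e ℂ)) * C * (swapM n ⊗ₖ (1 : Matrix e e ℂ))ᴴ) p q
      = C ((p.1.2,p.1.1),p.2) ((q.1.2,q.1.1),q.2) := by
  simp [swapM, Matrix.mul_apply, Matrix.conjTranspose_apply, Matrix.kroneckerMap_apply,
    Matrix.one_apply, Fintype.sum_prod_type, ite_and, apply_ite (starRingEnd ℂ),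
    mul_ite, ite_mul, mul_zero, zero_mul]

lemma step3 (U : Matrix (n × e) (n × e) ℂ) (ε : e → ℂ) (ρ₁ ρ : Matrix n n ℂ) (i j : n) :
    ∑ a, ∑ k, (idT U * ((ρ₁ ⊗ₖ ρ) ⊗ₖ vecProj ε) * (idT U)ᴴ) ((a,i),k) ((a,j),k)
      = (∑ x, ρ₁ x x) * S1 U ε ρ i j := by
  simp only [S1, ptrace, Matrix.of_apply, Matrix.mul_apply, Matrix.conjTranspose_apply,
    idT, Matrix.kroneckerMap_apply, vecProj]
  rw [Finset.sum_mul]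
  refine Finset.sum_congr rfl fun a _ => ?_
  rw [Finset.mul_sum]
  refine Finset.sum_congr rfl fun k _ => ?_
  simp only [Fintype.sum_prod_type, ite_and, apply_ite (starRingEnd ℂ), mul_ite, ite_mul,
    mul_zero, zero_mul, map_zero, apply_ite (star : ℂ → ℂ), star_zero,
    Finset.sum_ite_irrel, Finset.sum_const_zero,
    Finset.sum_ite_eq, Finset.sum_ite_eq', Finset.mem_univ,
    if_true, Finset.mul_sum, Finset.sum_mul]
  exact Finset.sum_congr rfl fun _ _ => Finset.sum_congr rfl fun _ _ =>
    Finset.sum_congr rfl fun _ _ => Finset.sum_congr rfl fun _ _ => by ring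

lemma key (U : Matrix (n × e) (n × e) ℂ) (hU : Uᴴ * U = 1) (ε : e → ℂ)
    (ρ₁ ρ : Matrix n n ℂ) (i j : n) :
    ∑ a, S2 U ε (ρ₁ ⊗ₖ ρ) (i,a) (j,a) = (∑ x, ρ₁ x x) * S1 U ε ρ i j := by
  set M := (ρ₁ ⊗ₖ ρ) ⊗ₖ vecProj ε with hM
  set B := (swapM n ⊗ₖ (1 : Matrix e e ℂ)) * (idT U * M * (idT U)ᴴ) *
      (swapM n ⊗ₖ (1 : Matrix e e ℂ))ᴴ with hBdef
  have hB : U2m U * M * (U2m U)ᴴ = idT U * B * (idT U)ᴴ := by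
    simp only [hBdef, U2m, Matrix.conjTranspose_mul, Matrix.mul_assoc]
  calc ∑ a, S2 U ε (ρ₁ ⊗ₖ ρ) (i,a) (j,a)
      = ∑ a, ∑ k, (idT U * B * (idT U)ᴴ) ((i,a),k) ((j,a),k) := by
        simp only [S2, ptrace, Matrix.of_apply, ← hM, hB]
    _ = ∑ a, ∑ k, B ((i,a),k) ((j,a),k) := step1 U hU B i j
    _ = ∑ a, ∑ k, (idT U * M * (idT U)ᴴ) ((a,i),k) ((a,j),k) := by
        simp only [hBdef, step2]
    _ = (∑ x, ρ₁ x x) * S1 U ε ρ i j := step3 U ε ρ₁ ρ i j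

end Aux

/-- Equal second-level superoperators imply equal first-level superoperators. -/
theorem stmt2 {n e e' : Type*} [Fintype n] [DecidableEq n]
    [Fintype e] [DecidableEq e] [Fintype e'] [DecidableEq e']
    (U : Matrix (n × e) (n × e) ℂ) (hU : U ∈ Matrix.unitaryGroup (n × e) ℂ)
    (ε : e → ℂ) (hε : ∑ k, star (ε k) * ε k = 1)
    (U' : Matrix (n × e') (n × e') ℂ) (hU' : U' ∈ Matrix.unitaryGroup (n × e') ℂ)
    (ε' : e' → ℂ) (hε' : ∑ k, star (ε' k) * ε' k = 1)
    (h2 : ∀ σ : Matrix (n × n) (n × n) ℂ, S2 U ε σ = S2 U' ε' σ) :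
    ∀ ρ : Matrix n n ℂ, S1 U ε ρ = S1 U' ε' ρ := by
  intro ρ
  rcases isEmpty_or_nonempty n with h | h
  · ext i j; exact (h.false i).elim
  · obtain ⟨i₀⟩ := h
    have hUc : Uᴴ * U = 1 := by
      have := hU.1; rwa [Matrix.star_eq_conjTranspose] at this
    have hUc' : U'ᴴ * U' = 1 := by
      have := hU'.1; rwa [Matrix.star_eq_conjTranspose] at this
    have htr : (∑ x, Matrix.single i₀ i₀ (1:ℂ) x x) = 1 := by
      simp [Matrix.single, ite_and]
    ext i j
    have h1 := key U hUc ε (Matrix.single i₀ i₀ 1) ρ i j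
    have h2' := key U' hUc' ε' (Matrix.single i₀ i₀ 1) ρ i j
    rw [htr, one_mul] at h1 h2'
    rw [← h1, ← h2', h2]
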